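/- Let D be a self-orthogonal t-(v,k,λ) design with k even such that C(D) is self-dual. If the all-one vector 1 lies in C(D̄), where D̄ is the complementary design, then C(D) = C(D̄); otherwise C(D̄) is a subcode of C(D) of index 2. -/

import Mathlib

open Finset

def IsDesign (v t k lam : ℕ) (B : Finset (Finset (Fin v))) : Prop :=
  (∀ b ∈ B, b.card = k) ∧
  ∀ T : Finset (Fin v), T.card = t → (B.filter (fun b => T ⊆ b)).card = lam

def IsSelfOrthogonalDesign (v t k lam : ℕ) (B : Finset (Finset (Fin v))) : Prop :=
  IsDesign v t k lam B ∧ ∀ b₁ ∈ B, ∀ b₂ ∈ B, b₁ ≠ b₂ → (b₁ ∩ b₂).card % 2 = k % 2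

def blockVec {v : ℕ} (b : Finset (Fin v)) : Fin v → ZMod 2 := fun i => if i ∈ b then 1 else 0

def designCode (v : ℕ) (B : Finset (Finset (Fin v))) : Submodule (ZMod 2) (Fin v → ZMod 2) :=
  Submodule.span (ZMod 2) (blockVec '' ↑B)

def dualSet {v : ℕ} (C : Set (Fin v → ZMod 2)) : Set (Fin v → ZMod 2) :=
  {y | ∀ x ∈ C, ∑ i, x i * y i = 0}

def codeWt {v : ℕ} (x : Fin v → ZMod 2) : ℕ := (univ.filter fun i => x i ≠ 0).card

noncomputable def numWt {v : ℕ} (C : Submodule (ZMod 2) (Fin v → ZMod 2)) (w : ℕ) : ℕ :=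
  Nat.card {x : Fin v → ZMod 2 // x ∈ C ∧ codeWt x = w}

lemma blockVec_compl {v : ℕ} (b : Finset (Fin v)) :
    blockVec bᶜ = (fun _ => 1) + blockVec b := by
  funext i
  simp only [blockVec, Finset.mem_compl, Pi.add_apply]
  by_cases h : i ∈ b <;> simp [h]
  decide

lemma add_one_one {v : ℕ} (x : Fin v → ZMod 2) :
    (x + (fun _ => 1)) + x = (fun _ => 1) := by
  funext i
  simp only [Pi.add_apply]
  rw [add_right_comm, CharTwo.add_self_eq_zero, zero_add]

theorem designCode_complementary (v t k lam : ℕ) (B : Finset (Finset (Fin v)))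
    (hD : IsSelfOrthogonalDesign v t k lam B) (hk : Even k)
    (hsd : (designCode v B : Set (Fin v → ZMod 2)) = dualSet (designCode v B)) :
    (((fun _ => 1) : Fin v → ZMod 2) ∈ designCode v (B.image fun b => bᶜ) →
      designCode v (B.image fun b => bᶜ) = designCode v B) ∧
    (((fun _ => 1) : Fin v → ZMod 2) ∉ designCode v (B.image fun b => bᶜ) →
      designCode v (B.image fun b => bᶜ) ≤ designCode v B ∧
      AddSubgroup.relIndex (designCode v (B.image fun b => bᶜ)).toAddSubgroup
        (designCode v B).toAddSubgroup = 2) := by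
  -- 1 ∈ C(D)
  have hone : ((fun _ => 1) : Fin v → ZMod 2) ∈ designCode v B := by
    have : ((fun _ => 1) : Fin v → ZMod 2) ∈ (designCode v B : Set (Fin v → ZMod 2)) := by
      rw [hsd]
      intro x hx
      simp only [mul_one]
      induction hx using Submodule.span_induction with
      | mem x hx =>
        obtain ⟨b, hb, rfl⟩ := hx
        have hcard : b.card = k := hD.1.1 b (Finset.mem_coe.mp hb)
        have hsum : ∑ i, blockVec b i = (b.card : ZMod 2) := by
          simp [blockVec, Finset.sum_boole]
        rw [hsum, hcard]
        obtain ⟨m, rfl⟩ := hk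
        push_cast
        exact CharTwo.add_self_eq_zero _
      | zero => simp
      | add x y _ _ hx hy => simp [Finset.sum_add_distrib, hx, hy]
      | smul c x _ hx =>
        simp only [Pi.smul_apply, smul_eq_mul]
        rw [← Finset.mul_sum, hx, mul_zero]
    exact this
  -- C(D̄) ≤ C(D)
  have hle : designCode v (B.image fun b => bᶜ) ≤ designCode v B := by
    rw [designCode, Submodule.span_le]
    rintro x ⟨c, hc, rfl⟩
    rw [Finset.coe_image] at hc
    obtain ⟨b, hb, rfl⟩ := hc
    rw [blockVec_compl]
    exact Submodule.add_mem _ hone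
      (Submodule.subset_span ⟨b, Finset.mem_coe.mp hb, rfl⟩)
  -- C(D) ≤ C(D̄) ⊔ span {1}
  have hle2 : designCode v B ≤
      designCode v (B.image fun b => bᶜ) ⊔
        Submodule.span (ZMod 2) {((fun _ => 1) : Fin v → ZMod 2)} := by
    rw [designCode, Submodule.span_le]
    rintro x ⟨b, hb, rfl⟩
    have h1 : blockVec bᶜ ∈ designCode v (B.image fun b => bᶜ) := by
      apply Submodule.subset_span
      exact ⟨bᶜ, by simpa using Finset.mem_image_of_mem (fun b => bᶜ) (Finset.mem_coe.mp hb), rfl⟩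
    have hbb : blockVec b = blockVec bᶜ + (fun _ => 1) := by
      rw [blockVec_compl]
      funext i
      simp only [Pi.add_apply]
      rw [add_right_comm, CharTwo.add_self_eq_zero, zero_add]
    rw [hbb]
    exact Submodule.add_mem _ (Submodule.mem_sup_left h1)
      (Submodule.mem_sup_right (Submodule.mem_span_singleton_self _))
  constructor
  · intro h1mem
    apply le_antisymm hle
    refine le_trans hle2 ?_
    rw [sup_le_iff]
    exact ⟨le_refl _, by rwa [Submodule.span_singleton_le_iff_mem]⟩
  · intro h1not
    refine ⟨hle, ?_⟩
    have key : ∀ x ∈ designCode v B,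
        (x ∈ designCode v (B.image fun b => bᶜ) ∧
          x + (fun _ => 1) ∉ designCode v (B.image fun b => bᶜ)) ∨
        (x ∉ designCode v (B.image fun b => bᶜ) ∧
          x + (fun _ => 1) ∈ designCode v (B.image fun b => bᶜ)) := by
      intro x hx
      have hnb : ¬ (x ∈ designCode v (B.image fun b => bᶜ) ∧
          x + (fun _ => 1) ∈ designCode v (B.image fun b => bᶜ)) := by
        rintro ⟨h1, h2⟩
        exact h1not (add_one_one x ▸ Submodule.add_mem _ h2 h1)
      obtain ⟨y, hy, z, hz, hyz⟩ := Submodule.mem_sup.mp (hle2 hx)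
      obtain ⟨c, rfl⟩ := Submodule.mem_span_singleton.mp hz
      rcases (by decide : ∀ c : ZMod 2, c = 0 ∨ c = 1) c with rfl | rfl
      · left
        have hxy : x = y := by rw [← hyz]; simp
        subst hxy
        exact ⟨hy, fun h => hnb ⟨hy, h⟩⟩
      · right
        have hxy : x + (fun _ => 1) = y := by
          rw [← hyz]
          simp only [one_smul]
          funext i
          simp only [Pi.add_apply]
          rw [add_assoc, CharTwo.add_self_eq_zero, add_zero]
        rw [hxy]
        exact ⟨fun h => hnb ⟨h, hxy ▸ hy⟩, hy⟩
    rw [AddSubgroup.relIndex, AddSubgroup.index_eq_two_iff]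
    refine ⟨⟨(fun _ => 1), hone⟩, ?_⟩
    rintro ⟨x, hx⟩
    rcases key x hx with ⟨h1, h2⟩ | ⟨h1, h2⟩
    · exact Or.inr ⟨h1, fun h => h2 (AddSubgroup.mem_addSubgroupOf.mp h)⟩
    · exact Or.inl ⟨h2, h1⟩
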